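/- Let X and Y be independent exponentially distributed random variables with means s > 0 and p > 0, and let γ_j, γ_k, ζ_j, ζ_k, σ² > 0. Set S_j = s/γ_j, S_k = p/γ_k, φ_j = γ_j ζ_j, φ_k = γ_k ζ_k, and define p_er = Pr{ X/σ² < γ_j and Y/(X ζ_j + σ²) > γ_k } + Pr{ X/(Y ζ_k + σ²) < γ_j and Y/(X ζ_j + σ²) < γ_k }. If φ_j φ_k ≥ 1, then p_er = 1 − ( S_j/(S_k φ_k + S_j) + ( S_k/(S_j φ_j + S_k) )·exp( −σ² (φ_j + 1)/S_k ) )·exp( −σ²/S_j ). -/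

import Mathlib

open MeasureTheory ProbabilityTheory

open Real Set


section NomaAux

variable {r t : ℝ}

lemma expIic (hr : 0 < r) (ht : 0 ≤ t) :
    expMeasure r (Iic t) = ENNReal.ofReal (1 - Real.exp (-(r*t))) := by
  rw [expMeasure, gammaMeasure, withDensity_apply _ measurableSet_Iic,
    show (gammaPDF 1 r) = exponentialPDF r from rfl,
    lintegral_exponentialPDF_eq_antiDeriv hr t, if_pos ht]

lemma expSingleton (r t : ℝ) : expMeasure r {t} = 0 := by
  rw [expMeasure, gammaMeasure, withDensity_apply _ (measurableSet_singleton t),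
    setLIntegral_measure_zero _ _ (by simp)]

lemma expIoi (hr : 0 < r) (ht : 0 ≤ t) :
    expMeasure r (Ioi t) = ENNReal.ofReal (Real.exp (-(r*t))) := by
  have : IsProbabilityMeasure (expMeasure r) := isProbabilityMeasure_expMeasure hr
  have h := measure_compl (μ := expMeasure r) (s := Iic t) measurableSet_Iic (measure_ne_top _ _)
  rw [compl_Iic] at h
  rw [h, measure_univ, expIic hr ht, ← ENNReal.ofReal_one,
    ← ENNReal.ofReal_sub _ (by nlinarith [Real.exp_le_one_iff.2 (by nlinarith : -(r*t) ≤ 0), Real.exp_pos (-(r*t))])]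
  norm_num

lemma expIio (hr : 0 < r) (ht : 0 ≤ t) :
    expMeasure r (Iio t) = ENNReal.ofReal (1 - Real.exp (-(r*t))) := by
  rw [← expIic hr ht, ← Iio_union_right, measure_union (by simp) (measurableSet_singleton t),
    expSingleton, add_zero]

lemma expIci (hr : 0 < r) (ht : 0 ≤ t) :
    expMeasure r (Ici t) = ENNReal.ofReal (Real.exp (-(r*t))) := by
  rw [← expIoi hr ht, ← Ioi_union_left, measure_union (by simp) (measurableSet_singleton t),
    expSingleton, add_zero]

lemma expIio0 (ht : t ≤ 0) : expMeasure r (Iio t) = 0 := by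
  rw [expMeasure, gammaMeasure, withDensity_apply _ measurableSet_Iio]
  exact lintegral_gammaPDF_of_nonpos ht

lemma expIoo (hr : 0 < r) {u v : ℝ} (hu : 0 ≤ u) (huv : u ≤ v) :
    expMeasure r (Ioo u v) = ENNReal.ofReal (Real.exp (-(r*u)) - Real.exp (-(r*v))) := by
  have : IsProbabilityMeasure (expMeasure r) := isProbabilityMeasure_expMeasure hr
  rcases eq_or_lt_of_le huv with h | h
  · subst h; simp
  have hexp : Real.exp (-(r*v)) ≤ Real.exp (-(r*u)) :=
    Real.exp_le_exp.2 (by nlinarith)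
  have hun : Ioo u v ∪ Ici v = Ioi u := Ioo_union_Ici_eq_Ioi h
  have hdisj : Disjoint (Ioo u v) (Ici v) := by
    rw [disjoint_left]; intro x hx hx'; exact absurd hx.2 (not_lt.2 hx')
  have key : expMeasure r (Ioo u v) + expMeasure r (Ici v) = expMeasure r (Ioi u) := by
    rw [← measure_union hdisj measurableSet_Ici, hun]
  have := ENNReal.eq_sub_of_add_eq (measure_ne_top _ _) key
  rw [this, expIoi hr hu, expIci hr (le_trans hu huv),
    ENNReal.ofReal_sub _ (Real.exp_pos _).le]

lemma expIco (hr : 0 < r) {v : ℝ} (hv : 0 ≤ v) :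
    expMeasure r (Ico 0 v) = ENNReal.ofReal (1 - Real.exp (-(r*v))) := by
  have : IsProbabilityMeasure (expMeasure r) := isProbabilityMeasure_expMeasure hr
  have h1 : Iio v ⊆ Ico 0 v ∪ Iio 0 := fun x hx => by
    by_cases h : 0 ≤ x
    exacts [Or.inl ⟨h, hx⟩, Or.inr (lt_of_not_ge h)]
  have heq : expMeasure r (Ico 0 v) = expMeasure r (Iio v) := by
    refine le_antisymm (measure_mono fun x hx => hx.2) ?_
    calc expMeasure r (Iio v) ≤ expMeasure r (Ico 0 v ∪ Iio 0) := measure_mono h1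
      _ ≤ expMeasure r (Ico 0 v) + expMeasure r (Iio 0) := measure_union_le _ _
      _ = expMeasure r (Ico 0 v) := by rw [expIio0 le_rfl, add_zero]
  rw [heq, expIio hr hv]

lemma prod_slice (ν ρ : Measure ℝ) [SFinite ν] [SFinite ρ] {s : Set ℝ} (hs : MeasurableSet s)
    (T : ℝ → Set ℝ) (hT : MeasurableSet {q : ℝ × ℝ | q.1 ∈ s ∧ q.2 ∈ T q.1}) :
    (ν.prod ρ) {q : ℝ × ℝ | q.1 ∈ s ∧ q.2 ∈ T q.1} = ∫⁻ x in s, ρ (T x) ∂ν := by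
  rw [Measure.prod_apply hT, ← lintegral_indicator hs]
  congr 1; ext x
  by_cases hx : x ∈ s
  · rw [indicator_of_mem hx]
    congr 1
    ext y; simp [hx]
  · rw [indicator_of_notMem hx]
    have : Prod.mk x ⁻¹' {q : ℝ × ℝ | q.1 ∈ s ∧ q.2 ∈ T q.1} = ∅ := by
      ext y; simp [hx]
    rw [this, measure_empty]

lemma lint_withDensity (hr : 0 < r) {s : Set ℝ} (hs : MeasurableSet s)
    (hs0 : s ⊆ Ici 0) {g : ℝ → ℝ} (hg : Measurable g) :
    ∫⁻ x in s, ENNReal.ofReal (g x) ∂(expMeasure r)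
      = ∫⁻ x in s, ENNReal.ofReal (r * Real.exp (-(r*x)) * g x) := by
  have hm : Measurable (gammaPDF 1 r) := (measurable_gammaPDFReal 1 r).ennreal_ofReal
  rw [expMeasure, gammaMeasure, restrict_withDensity hs,
    lintegral_withDensity_eq_lintegral_mul _ hm (hg.ennreal_ofReal)]
  refine setLIntegral_congr_fun_ae hs (ae_of_all _ fun x hx => ?_)
  have hx0 : (0:ℝ) ≤ x := hs0 hx
  rw [Pi.mul_apply, show gammaPDF 1 r x = exponentialPDF r x from rfl,
    exponentialPDF_of_nonneg hx0, ← ENNReal.ofReal_mul (by positivity)]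

lemma pipeline {rs rp : ℝ} (hrs : 0 < rs) (hrp : 0 < rp) {s : Set ℝ} (hs : MeasurableSet s)
    (hs0 : s ⊆ Ici 0) (T : ℝ → Set ℝ)
    (hT : MeasurableSet {q : ℝ × ℝ | q.1 ∈ s ∧ q.2 ∈ T q.1}) {g : ℝ → ℝ} (hg : Measurable g)
    (hgT : ∀ x ∈ s, (expMeasure rp) (T x) = ENNReal.ofReal (g x)) :
    ((expMeasure rs).prod (expMeasure rp)) {q : ℝ × ℝ | q.1 ∈ s ∧ q.2 ∈ T q.1}
      = ∫⁻ x in s, ENNReal.ofReal (rs * Real.exp (-(rs*x)) * g x) := by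
  haveI : IsProbabilityMeasure (expMeasure rs) := isProbabilityMeasure_expMeasure hrs
  haveI : IsProbabilityMeasure (expMeasure rp) := isProbabilityMeasure_expMeasure hrp
  rw [prod_slice _ _ hs T hT, setLIntegral_congr_fun_ae hs (ae_of_all _ hgT),
    lint_withDensity hrs hs hs0 hg]

lemma lint_toOfReal {s : Set ℝ} (hs : MeasurableSet s) {f : ℝ → ℝ} (hf : IntegrableOn f s)
    (hnn : ∀ x ∈ s, 0 ≤ f x) :
    ∫⁻ x in s, ENNReal.ofReal (f x) = ENNReal.ofReal (∫ x in s, f x) :=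
  (ofReal_integral_eq_lintegral_ofReal hf ((ae_restrict_iff' hs).2 (ae_of_all _ hnn))).symm

lemma int_Ico {lam : ℝ} (hl : lam ≠ 0) (K a : ℝ) (ha : 0 ≤ a) :
    ∫ x in Ico 0 a, K * Real.exp (-(lam*x)) = K * ((1 - Real.exp (-(lam*a)))/lam) := by
  rw [integral_Ico_eq_integral_Ioo, ← integral_Ioc_eq_integral_Ioo,
    ← intervalIntegral.integral_of_le ha, intervalIntegral.integral_const_mul]
  have key : ∫ x in (0:ℝ)..a, Real.exp (-lam*x)
      = (Real.exp (-lam*a) - Real.exp (-lam*0))/(-lam) := by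
    have h : ∀ x ∈ Set.uIcc (0:ℝ) a, HasDerivAt (fun y => Real.exp (-lam*y)/(-lam)) (Real.exp (-lam*x)) x := by
      intro x _
      have h1 : HasDerivAt (fun y => -lam*y) (-lam) x := by
        simpa using (hasDerivAt_id x).const_mul (-lam)
      have h2 := (h1.exp).div_const (-lam)
      rwa [mul_div_cancel_right₀ _ (neg_ne_zero.2 hl)] at h2
    rw [intervalIntegral.integral_eq_sub_of_hasDerivAt h
      ((Real.continuous_exp.comp (continuous_const.mul continuous_id)).intervalIntegrable 0 a)]
    ring
  simp only [neg_mul] at key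
  rw [key, mul_zero, neg_zero, Real.exp_zero]
  ring

lemma int_Ici {lam : ℝ} (hl : 0 < lam) (K a : ℝ) :
    ∫ x in Ici a, K * Real.exp (-(lam*x)) = K * (Real.exp (-(lam*a))/lam) := by
  rw [integral_Ici_eq_integral_Ioi, integral_const_mul]
  have := integral_comp_mul_left_Ioi (fun x => Real.exp (-x)) a hl
  simp only [integral_exp_neg_Ioi] at this
  rw [this, smul_eq_mul]
  ring

lemma integrableOn_exp_Ici {lam : ℝ} (hl : 0 < lam) (K a : ℝ) :
    IntegrableOn (fun x => K * Real.exp (-(lam*x))) (Ici a) := by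
  rw [integrableOn_Ici_iff_integrableOn_Ioi]
  simpa [neg_mul, IntegrableOn] using (exp_neg_integrableOn_Ioi a hl).const_mul K

lemma integrableOn_exp_Ico {lam : ℝ} (hl : 0 < lam) (K a : ℝ) :
    IntegrableOn (fun x => K * Real.exp (-(lam*x))) (Ico 0 a) :=
  (integrableOn_exp_Ici hl K 0).mono_set (fun x hx => hx.1)

lemma measure_eq_inter {α : Type*} [MeasurableSpace α] (μ : Measure α) {S Q : Set α}
    (hQ : μ Qᶜ = 0) : μ S = μ (S ∩ Q) := by
  refine le_antisymm ?_ (measure_mono inter_subset_left)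
  calc μ S ≤ μ ((S ∩ Q) ∪ Qᶜ) := measure_mono fun x hx => by
        by_cases h : x ∈ Q
        exacts [Or.inl ⟨hx, h⟩, Or.inr h]
    _ ≤ μ (S ∩ Q) + μ Qᶜ := measure_union_le _ _
    _ = μ (S ∩ Q) := by rw [hQ, add_zero]

end NomaAux


set_option maxHeartbeats 1000000

lemma exp_arg_le (s p γj γk ζj ζk σ2 x : ℝ)
    (hs : 0 < s) (hp : 0 < p) (hγj : 0 < γj) (hζj : 0 < ζj) (hζk : 0 < ζk)
    (key : (x - γj*σ2)/(γj*ζk) ≤ γk*(x*ζj+σ2)) :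
    -(γk*σ2/p) + -((1/s + γk*ζj/p)*x)
      ≤ (1/p)*((γj*σ2)/(γj*ζk)) + -((1/s + 1/(p*(γj*ζk)))*x) := by
  rw [← sub_nonneg]
  have hid : (1/p)*((γj*σ2)/(γj*ζk)) + -((1/s + 1/(p*(γj*ζk)))*x)
      - (-(γk*σ2/p) + -((1/s + γk*ζj/p)*x))
      = (1/p) * (γk*(x*ζj+σ2) - (x - γj*σ2)/(γj*ζk)) := by
    field_simp
    ring
  rw [hid]
  exact mul_nonneg (by positivity) (sub_nonneg.2 key)

lemma final_algebra (s p γj γk ζj ζk σ2 : ℝ)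
    (hs : 0 < s) (hp : 0 < p) (hγj : 0 < γj) (hγk : 0 < γk)
    (hζj : 0 < ζj) (hζk : 0 < ζk) (hσ : 0 < σ2) :
    (1/s * Real.exp (-(γk*σ2/p))) * ((1 - Real.exp (-((1/s + γk*ζj/p)*(γj*σ2))))/(1/s + γk*ζj/p)) + ((1/s) * ((1 - Real.exp (-((1/s)*(γj*σ2))))/(1/s)) - (1/s * Real.exp (-(γk*σ2/p))) * ((1 - Real.exp (-((1/s + γk*ζj/p)*(γj*σ2))))/(1/s + γk*ζj/p)) + ((1/s * Real.exp ((1/p)*((γj*σ2)/(γj*ζk)))) * (Real.exp (-((1/s + 1/(p*(γj*ζk)))*(γj*σ2)))/(1/s + 1/(p*(γj*ζk)))) - (1/s * Real.exp (-(γk*σ2/p))) * (Real.exp (-((1/s + γk*ζj/p)*(γj*σ2)))/(1/s + γk*ζj/p))))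
      = 1 - ((s/γj) / ((p/γk) * (γk*ζk) + (s/γj))
          + ((p/γk) / ((s/γj) * (γj*ζj) + (p/γk))) * Real.exp (-σ2 * ((γj*ζj) + 1) / (p/γk)))
          * Real.exp (-σ2 / (s/γj)) := by
  have hs' := hs.ne'
  have hp' := hp.ne'
  have hγj' := hγj.ne'
  have hγk' := hγk.ne'
  have hζj' := hζj.ne'
  have hζk' := hζk.ne'
  have hlam3 : (0:ℝ) < (1/s + 1/(p*(γj*ζk))) := by positivity
  have hlam4 : (0:ℝ) < (1/s + γk*ζj/p) := by positivity
  have e1 : Real.exp (-((1/s)*(γj*σ2))) = Real.exp (-σ2/(s/γj)) := by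
    congr 1; field_simp
  have e3 : Real.exp ((1/p)*((γj*σ2)/(γj*ζk))) * Real.exp (-((1/s + 1/(p*(γj*ζk)))*(γj*σ2))) = Real.exp (-σ2/(s/γj)) := by
    rw [← Real.exp_add]; congr 1; field_simp; ring
  have e4 : Real.exp (-(γk*σ2/p)) * Real.exp (-((1/s + γk*ζj/p)*(γj*σ2))) = Real.exp (-σ2*((γj*ζj)+1)/(p/γk)) * Real.exp (-σ2/(s/γj)) := by
    rw [← Real.exp_add, ← Real.exp_add]; congr 1; field_simp; ring
  have c3 : (1/s)/(1/s + 1/(p*(γj*ζk))) = (p/γk)*(γk*ζk)/((p/γk)*(γk*ζk) + s/γj) := by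
    rw [div_eq_div_iff (by positivity) (by positivity)]; field_simp
  have c4 : (1/s)/(1/s + γk*ζj/p) = (p/γk)/((s/γj)*(γj*ζj) + p/γk) := by
    rw [div_eq_div_iff (by positivity) (by positivity)]; field_simp; ring
  rw [show (1/s * Real.exp (-(γk*σ2/p))) * ((1 - Real.exp (-((1/s + γk*ζj/p)*(γj*σ2))))/(1/s + γk*ζj/p)) + ((1/s) * ((1 - Real.exp (-((1/s)*(γj*σ2))))/(1/s)) - (1/s * Real.exp (-(γk*σ2/p))) * ((1 - Real.exp (-((1/s + γk*ζj/p)*(γj*σ2))))/(1/s + γk*ζj/p)) + ((1/s * Real.exp ((1/p)*((γj*σ2)/(γj*ζk)))) * (Real.exp (-((1/s + 1/(p*(γj*ζk)))*(γj*σ2)))/(1/s + 1/(p*(γj*ζk)))) - (1/s * Real.exp (-(γk*σ2/p))) * (Real.exp (-((1/s + γk*ζj/p)*(γj*σ2)))/(1/s + γk*ζj/p))))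
      = (1/s) * ((1 - Real.exp (-((1/s)*(γj*σ2))))/(1/s))
        + (1/s) * ((Real.exp ((1/p)*((γj*σ2)/(γj*ζk))) * Real.exp (-((1/s + 1/(p*(γj*ζk)))*(γj*σ2))))/(1/s + 1/(p*(γj*ζk))))
        - (1/s) * ((Real.exp (-(γk*σ2/p)) * Real.exp (-((1/s + γk*ζj/p)*(γj*σ2))))/(1/s + γk*ζj/p)) from by ring]
  rw [e1, e3, e4]
  rw [show (1/s) * ((1 - Real.exp (-σ2/(s/γj)))/(1/s)) = 1 - Real.exp (-σ2/(s/γj)) from by field_simp]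
  rw [show (1/s) * (Real.exp (-σ2/(s/γj))/(1/s + 1/(p*(γj*ζk)))) = ((1/s)/(1/s + 1/(p*(γj*ζk)))) * Real.exp (-σ2/(s/γj)) from by ring, c3]
  rw [show (1/s) * ((Real.exp (-σ2*((γj*ζj)+1)/(p/γk)) * Real.exp (-σ2/(s/γj)))/(1/s + γk*ζj/p)) = ((1/s)/(1/s + γk*ζj/p)) * (Real.exp (-σ2*((γj*ζj)+1)/(p/γk)) * Real.exp (-σ2/(s/γj))) from by ring, c4]
  have hD1 : (p/γk)*(γk*ζk) + s/γj ≠ 0 := by positivity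
  have hD2 : (s/γj)*(γj*ζj) + p/γk ≠ 0 := by positivity
  field_simp
  ring

/-- Closed-form two-user NOMA error probability (case `φ_j φ_k ≥ 1`): with `X, Y`
independent exponential received powers with means `s, p`, the failure
probability of user `j` under optimal SIC ordering equals
`1 − (S_j/(S_k φ_k + S_j) + (S_k/(S_j φ_j + S_k))e^{−σ²(φ_j+1)/S_k})e^{−σ²/S_j}`. -/
theorem noma_error_closed_form_geq_one
    {Ω : Type*} [MeasurableSpace Ω] (μ : Measure Ω) [IsProbabilityMeasure μ]
    (X Y : Ω → ℝ) (hXm : Measurable X) (hYm : Measurable Y)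
    (hXY : IndepFun X Y μ)
    (s p γj γk ζj ζk σ2 : ℝ)
    (hs : 0 < s) (hp : 0 < p)
    (hγj : 0 < γj) (hγk : 0 < γk) (hζj : 0 < ζj) (hζk : 0 < ζk) (hσ : 0 < σ2)
    (hX : μ.map X = expMeasure (1 / s)) (hY : μ.map Y = expMeasure (1 / p))
    (Sj Sk φj φk : ℝ)
    (hSj : Sj = s / γj) (hSk : Sk = p / γk)
    (hφj : φj = γj * ζj) (hφk : φk = γk * ζk)
    (hcase : 1 ≤ φj * φk) :
    (μ {ω | X ω / σ2 < γj ∧ Y ω / (X ω * ζj + σ2) > γk}).toReal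
      + (μ {ω | X ω / (Y ω * ζk + σ2) < γj ∧ Y ω / (X ω * ζj + σ2) < γk}).toReal
      = 1 - (Sj / (Sk * φk + Sj)
          + (Sk / (Sj * φj + Sk)) * Real.exp (-σ2 * (φj + 1) / Sk))
          * Real.exp (-σ2 / Sj) := by
  subst hSj hSk hφj hφk
  have hs' := hs.ne'
  have hp' := hp.ne'
  have hγj' := hγj.ne'
  have hγk' := hγk.ne'
  have hζj' := hζj.ne'
  have hζk' := hζk.ne'
  have hrs : (0:ℝ) < 1/s := by positivity
  have hrp : (0:ℝ) < 1/p := by positivity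
  have hνP : IsProbabilityMeasure (expMeasure (1/s)) := isProbabilityMeasure_expMeasure hrs
  have hρP : IsProbabilityMeasure (expMeasure (1/p)) := isProbabilityMeasure_expMeasure hrp
  have haa : (0:ℝ) < (γj*σ2) := by positivity
  have hlam4 : (0:ℝ) < (1/s + γk*ζj/p) := by positivity
  have hlam3 : (0:ℝ) < (1/s + 1/(p*(γj*ζk))) := by positivity
  have hK4 : (0:ℝ) < (1/s * Real.exp (-(γk*σ2/p))) := by positivity
  have hK3 : (0:ℝ) < (1/s * Real.exp ((1/p)*((γj*σ2)/(γj*ζk)))) := by positivity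
  -- transfer to the product measure
  have hT : Measurable fun ω => (X ω, Y ω) := hXm.prodMk hYm
  have hmap : μ.map (fun ω => (X ω, Y ω)) = (expMeasure (1/s)).prod (expMeasure (1/p)) := by
    rw [← hX, ← hY]
    exact (indepFun_iff_map_prod_eq_prod_map_map hXm.aemeasurable hYm.aemeasurable).1 hXY
  set pm : Measure (ℝ × ℝ) := (expMeasure (1/s)).prod (expMeasure (1/p)) with hpm_def
  -- measurability of the planar sets
  have hSAm : MeasurableSet {q : ℝ × ℝ | q.1 / σ2 < γj ∧ q.2 / (q.1 * ζj + σ2) > γk} :=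
    (measurableSet_lt (measurable_fst.div_const σ2) measurable_const).inter
      (measurableSet_lt measurable_const
        (measurable_snd.div ((measurable_fst.mul_const ζj).add_const σ2)))
  have hSBm : MeasurableSet {q : ℝ × ℝ | q.1 / (q.2 * ζk + σ2) < γj ∧ q.2 / (q.1 * ζj + σ2) < γk} :=
    (measurableSet_lt (measurable_fst.div ((measurable_snd.mul_const ζk).add_const σ2))
      measurable_const).inter
      (measurableSet_lt (measurable_snd.div ((measurable_fst.mul_const ζj).add_const σ2))
        measurable_const)
  have hcm : Measurable fun x : ℝ => (γk*(x*ζj+σ2)) :=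
    ((measurable_id.mul_const ζj).add_const σ2).const_mul γk
  have hlm : Measurable fun x : ℝ => ((x - γj*σ2)/(γj*ζk)) :=
    (measurable_id.sub_const _).div_const _
  have hA2m : MeasurableSet {q : ℝ × ℝ | q.1 ∈ Ico 0 (γj*σ2) ∧ q.2 ∈ Ioi (γk*(q.1*ζj+σ2))} := by
    have h : {q : ℝ × ℝ | q.1 ∈ Ico 0 (γj*σ2) ∧ q.2 ∈ Ioi (γk*(q.1*ζj+σ2))} = (Prod.fst ⁻¹' Ico 0 (γj*σ2)) ∩ {q : ℝ × ℝ | (γk*(q.1*ζj+σ2)) < q.2} := rfl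
    rw [h]
    exact (measurable_fst measurableSet_Ico).inter
      (measurableSet_lt (hcm.comp measurable_fst) measurable_snd)
  have hB1m : MeasurableSet {q : ℝ × ℝ | q.1 ∈ Ico 0 (γj*σ2) ∧ q.2 ∈ Ico 0 (γk*(q.1*ζj+σ2))} := by
    have h : {q : ℝ × ℝ | q.1 ∈ Ico 0 (γj*σ2) ∧ q.2 ∈ Ico 0 (γk*(q.1*ζj+σ2))} = (Prod.fst ⁻¹' Ico 0 (γj*σ2))
        ∩ ({q : ℝ × ℝ | 0 ≤ q.2} ∩ {q : ℝ × ℝ | q.2 < (γk*(q.1*ζj+σ2))}) := by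
      ext q; simp [mem_Ico, and_assoc]
    rw [h]
    exact (measurable_fst measurableSet_Ico).inter
      ((measurableSet_le measurable_const measurable_snd).inter
        (measurableSet_lt measurable_snd (hcm.comp measurable_fst)))
  have hB2m : MeasurableSet {q : ℝ × ℝ | q.1 ∈ Ici (γj*σ2) ∧ q.2 ∈ Ioo ((q.1 - γj*σ2)/(γj*ζk)) (γk*(q.1*ζj+σ2))} := by
    have h : {q : ℝ × ℝ | q.1 ∈ Ici (γj*σ2) ∧ q.2 ∈ Ioo ((q.1 - γj*σ2)/(γj*ζk)) (γk*(q.1*ζj+σ2))} = (Prod.fst ⁻¹' Ici (γj*σ2))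
        ∩ ({q : ℝ × ℝ | ((q.1 - γj*σ2)/(γj*ζk)) < q.2} ∩ {q : ℝ × ℝ | q.2 < (γk*(q.1*ζj+σ2))}) := by
      ext q; simp [mem_Ioo, and_assoc]
    rw [h]
    exact (measurable_fst measurableSet_Ici).inter
      ((measurableSet_lt (hlm.comp measurable_fst) measurable_snd).inter
        (measurableSet_lt measurable_snd (hcm.comp measurable_fst)))
  -- the positive quadrant is conull
  have hQc : pm ((Ici 0 ×ˢ Ici 0) : Set (ℝ × ℝ))ᶜ = 0 := by
    have h1 : pm ((Iio 0) ×ˢ (univ : Set ℝ)) = 0 := by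
      rw [hpm_def, Measure.prod_prod, expIio0 le_rfl, zero_mul]
    have h2 : pm ((univ : Set ℝ) ×ˢ (Iio 0)) = 0 := by
      rw [hpm_def, Measure.prod_prod, expIio0 le_rfl, mul_zero]
    refine measure_mono_null (fun q hq => ?_) (measure_union_null h1 h2)
    simp only [mem_compl_iff, mem_prod, mem_Ici, not_and_or, not_le] at hq
    rcases hq with h | h
    · exact Or.inl (by simp [h])
    · exact Or.inr (by simp [h])
  -- set identities on the quadrant
  have hSAQ : {q : ℝ × ℝ | q.1 / σ2 < γj ∧ q.2 / (q.1 * ζj + σ2) > γk} ∩ ((Ici 0 ×ˢ Ici 0) : Set (ℝ × ℝ)) = {q : ℝ × ℝ | q.1 ∈ Ico 0 (γj*σ2) ∧ q.2 ∈ Ioi (γk*(q.1*ζj+σ2))} := by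
    ext ⟨x, y⟩
    simp only [mem_inter_iff, mem_setOf_eq, mem_prod, mem_Ici, mem_Ico, mem_Ioi, gt_iff_lt]
    constructor
    · rintro ⟨⟨h1, h2⟩, hx0, hy0⟩
      have hden : 0 < x * ζj + σ2 := by nlinarith [mul_nonneg hx0 hζj.le]
      exact ⟨⟨hx0, (div_lt_iff₀ hσ).1 h1⟩, (lt_div_iff₀ hden).1 h2⟩
    · rintro ⟨⟨hx0, hxa⟩, hyc⟩
      have hden : 0 < x * ζj + σ2 := by nlinarith [mul_nonneg hx0 hζj.le]
      have hc0 : 0 < (γk*(x*ζj+σ2)) := by nlinarith [mul_nonneg hx0 hζj.le]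
      exact ⟨⟨(div_lt_iff₀ hσ).2 hxa, (lt_div_iff₀ hden).2 hyc⟩, hx0, (hc0.trans hyc).le⟩
  have hSBQ : {q : ℝ × ℝ | q.1 / (q.2 * ζk + σ2) < γj ∧ q.2 / (q.1 * ζj + σ2) < γk} ∩ ((Ici 0 ×ˢ Ici 0) : Set (ℝ × ℝ)) = {q : ℝ × ℝ | q.1 ∈ Ico 0 (γj*σ2) ∧ q.2 ∈ Ico 0 (γk*(q.1*ζj+σ2))} ∪ {q : ℝ × ℝ | q.1 ∈ Ici (γj*σ2) ∧ q.2 ∈ Ioo ((q.1 - γj*σ2)/(γj*ζk)) (γk*(q.1*ζj+σ2))} := by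
    ext ⟨x, y⟩
    simp only [mem_inter_iff, mem_setOf_eq, mem_prod, mem_Ici, mem_Ico, mem_Ioo, mem_union]
    constructor
    · rintro ⟨⟨h1, h2⟩, hx0, hy0⟩
      have hdenx : 0 < x * ζj + σ2 := by nlinarith [mul_nonneg hx0 hζj.le]
      have hdeny : 0 < y * ζk + σ2 := by nlinarith [mul_nonneg hy0 hζk.le]
      have h2' : y < (γk*(x*ζj+σ2)) := (div_lt_iff₀ hdenx).1 h2
      have h1' : x < γj * (y * ζk + σ2) := (div_lt_iff₀ hdeny).1 h1
      by_cases hxa : x < (γj*σ2)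
      · exact Or.inl ⟨⟨hx0, hxa⟩, hy0, h2'⟩
      · refine Or.inr ⟨not_lt.1 hxa, ?_, h2'⟩
        rw [div_lt_iff₀ (by positivity)]
        nlinarith
    · rintro (⟨⟨hx0, hxa⟩, hy0, hyc⟩ | ⟨hxa, hly, hyc⟩)
      · have hdenx : 0 < x * ζj + σ2 := by nlinarith [mul_nonneg hx0 hζj.le]
        have hdeny : 0 < y * ζk + σ2 := by nlinarith [mul_nonneg hy0 hζk.le]
        refine ⟨⟨?_, (div_lt_iff₀ hdenx).2 hyc⟩, hx0, hy0⟩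
        rw [div_lt_iff₀ hdeny]
        nlinarith [mul_nonneg hy0 hζk.le]
      · have hx0 : (0:ℝ) ≤ x := le_trans haa.le hxa
        have hl0 : 0 ≤ ((x - γj*σ2)/(γj*ζk)) := div_nonneg (by linarith) (by positivity)
        have hy0 : (0:ℝ) ≤ y := le_trans hl0 hly.le
        have hdenx : 0 < x * ζj + σ2 := by nlinarith [mul_nonneg hx0 hζj.le]
        have hdeny : 0 < y * ζk + σ2 := by nlinarith [mul_nonneg hy0 hζk.le]
        refine ⟨⟨?_, (div_lt_iff₀ hdenx).2 hyc⟩, hx0, hy0⟩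
        rw [div_lt_iff₀ hdeny]
        have h3 := (div_lt_iff₀ (show (0:ℝ) < γj * ζk by positivity)).1 hly
        nlinarith
  have hB12 : Disjoint {q : ℝ × ℝ | q.1 ∈ Ico 0 (γj*σ2) ∧ q.2 ∈ Ico 0 (γk*(q.1*ζj+σ2))} {q : ℝ × ℝ | q.1 ∈ Ici (γj*σ2) ∧ q.2 ∈ Ioo ((q.1 - γj*σ2)/(γj*ζk)) (γk*(q.1*ζj+σ2))} := by
    rw [disjoint_left]
    rintro ⟨x, y⟩ h1 h2
    exact absurd h1.1.2 (not_lt.2 h2.1)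
  -- transfer the two probabilities
  have hmuA : μ {ω | X ω / σ2 < γj ∧ Y ω / (X ω * ζj + σ2) > γk} = pm {q : ℝ × ℝ | q.1 ∈ Ico 0 (γj*σ2) ∧ q.2 ∈ Ioi (γk*(q.1*ζj+σ2))} := by
    have hpre : {ω | X ω / σ2 < γj ∧ Y ω / (X ω * ζj + σ2) > γk}
        = (fun ω => (X ω, Y ω)) ⁻¹' {q : ℝ × ℝ | q.1 / σ2 < γj ∧ q.2 / (q.1 * ζj + σ2) > γk} := rfl
    rw [hpre, ← Measure.map_apply hT hSAm, hmap, measure_eq_inter pm hQc, hSAQ]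
  have hmuB : μ {ω | X ω / (Y ω * ζk + σ2) < γj ∧ Y ω / (X ω * ζj + σ2) < γk}
      = pm {q : ℝ × ℝ | q.1 ∈ Ico 0 (γj*σ2) ∧ q.2 ∈ Ico 0 (γk*(q.1*ζj+σ2))} + pm {q : ℝ × ℝ | q.1 ∈ Ici (γj*σ2) ∧ q.2 ∈ Ioo ((q.1 - γj*σ2)/(γj*ζk)) (γk*(q.1*ζj+σ2))} := by
    have hpre : {ω | X ω / (Y ω * ζk + σ2) < γj ∧ Y ω / (X ω * ζj + σ2) < γk}
        = (fun ω => (X ω, Y ω)) ⁻¹' {q : ℝ × ℝ | q.1 / (q.2 * ζk + σ2) < γj ∧ q.2 / (q.1 * ζj + σ2) < γk} := rfl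
    rw [hpre, ← Measure.map_apply hT hSBm, hmap, measure_eq_inter pm hQc, hSBQ,
      measure_union hB12 hB2m]
  have hcx_nonneg : ∀ x : ℝ, 0 ≤ x → 0 ≤ (γk*(x*ζj+σ2)) := fun x hx => by
    nlinarith [mul_nonneg hx hζj.le]
  -- value of the A-part
  have hpmA2 : pm {q : ℝ × ℝ | q.1 ∈ Ico 0 (γj*σ2) ∧ q.2 ∈ Ioi (γk*(q.1*ζj+σ2))} = ∫⁻ x in Ico 0 (γj*σ2), ENNReal.ofReal ((1/s * Real.exp (-(γk*σ2/p))) * Real.exp (-((1/s + γk*ζj/p)*x))) := by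
    rw [hpm_def, pipeline hrs hrp measurableSet_Ico (fun x hx => hx.1)
      (fun x => Ioi (γk*(x*ζj+σ2))) hA2m (g := fun x => Real.exp (-((1/p) * (γk*(x*ζj+σ2)))))
      (by fun_prop) (fun x hx => expIoi hrp (hcx_nonneg x hx.1))]
    refine lintegral_congr fun x => ?_
    congr 1
    rw [show (1/s * Real.exp (-(γk*σ2/p))) * Real.exp (-((1/s + γk*ζj/p)*x))
        = (1/s) * Real.exp (-(γk*σ2/p) + -((1/s + γk*ζj/p)*x)) from by rw [Real.exp_add]; ring,
      show (1/s) * Real.exp (-((1/s)*x)) * Real.exp (-((1/p) * (γk*(x*ζj+σ2))))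
        = (1/s) * Real.exp (-((1/s)*x) + -((1/p) * (γk*(x*ζj+σ2)))) from by rw [Real.exp_add]; ring]
    congr 2
    field_simp
    ring
  -- value of the B1-part
  have hpmB1 : pm {q : ℝ × ℝ | q.1 ∈ Ico 0 (γj*σ2) ∧ q.2 ∈ Ico 0 (γk*(q.1*ζj+σ2))} = ∫⁻ x in Ico 0 (γj*σ2),
      ENNReal.ofReal ((1/s) * Real.exp (-((1/s)*x)) - (1/s * Real.exp (-(γk*σ2/p))) * Real.exp (-((1/s + γk*ζj/p)*x))) := by
    rw [hpm_def, pipeline hrs hrp measurableSet_Ico (fun x hx => hx.1)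
      (fun x => Ico 0 (γk*(x*ζj+σ2))) hB1m (g := fun x => 1 - Real.exp (-((1/p) * (γk*(x*ζj+σ2)))))
      (by fun_prop) (fun x hx => expIco hrp (hcx_nonneg x hx.1))]
    refine lintegral_congr fun x => ?_
    congr 1
    rw [mul_sub, mul_one,
      show (1/s * Real.exp (-(γk*σ2/p))) * Real.exp (-((1/s + γk*ζj/p)*x))
        = (1/s) * Real.exp (-(γk*σ2/p) + -((1/s + γk*ζj/p)*x)) from by rw [Real.exp_add]; ring,
      show (1/s) * Real.exp (-((1/s)*x)) * Real.exp (-((1/p) * (γk*(x*ζj+σ2))))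
        = (1/s) * Real.exp (-((1/s)*x) + -((1/p) * (γk*(x*ζj+σ2)))) from by rw [Real.exp_add]; ring]
    congr 3
    field_simp
    ring
  -- value of the B2-part
  have hlc : ∀ x : ℝ, (γj*σ2) ≤ x → ((x - γj*σ2)/(γj*ζk)) ≤ (γk*(x*ζj+σ2)) := by
    intro x hx
    have hx0 : (0:ℝ) < x := lt_of_lt_of_le haa hx
    rw [div_le_iff₀ (by positivity)]
    nlinarith [mul_nonneg (sub_nonneg.2 hcase) hx0.le,
      mul_pos (mul_pos hγj hζk) (mul_pos hγk hσ)]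
  have hl0 : ∀ x : ℝ, (γj*σ2) ≤ x → 0 ≤ ((x - γj*σ2)/(γj*ζk)) := fun x hx =>
    div_nonneg (by linarith) (by positivity)
  have hpmB2 : pm {q : ℝ × ℝ | q.1 ∈ Ici (γj*σ2) ∧ q.2 ∈ Ioo ((q.1 - γj*σ2)/(γj*ζk)) (γk*(q.1*ζj+σ2))} = ∫⁻ x in Ici (γj*σ2),
      ENNReal.ofReal ((1/s * Real.exp ((1/p)*((γj*σ2)/(γj*ζk)))) * Real.exp (-((1/s + 1/(p*(γj*ζk)))*x)) - (1/s * Real.exp (-(γk*σ2/p))) * Real.exp (-((1/s + γk*ζj/p)*x))) := by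
    rw [hpm_def, pipeline hrs hrp measurableSet_Ici (fun x hx => le_trans haa.le hx)
      (fun x => Ioo ((x - γj*σ2)/(γj*ζk)) (γk*(x*ζj+σ2))) hB2m
      (g := fun x => Real.exp (-((1/p) * ((x - γj*σ2)/(γj*ζk)))) - Real.exp (-((1/p) * (γk*(x*ζj+σ2)))))
      (by fun_prop) (fun x hx => expIoo hrp (hl0 x hx) (hlc x hx))]
    refine lintegral_congr fun x => ?_
    congr 1
    rw [mul_sub,
      show (1/s * Real.exp ((1/p)*((γj*σ2)/(γj*ζk)))) * Real.exp (-((1/s + 1/(p*(γj*ζk)))*x))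
        = (1/s) * Real.exp ((1/p)*((γj*σ2)/(γj*ζk)) + -((1/s + 1/(p*(γj*ζk)))*x)) from by rw [Real.exp_add]; ring,
      show (1/s * Real.exp (-(γk*σ2/p))) * Real.exp (-((1/s + γk*ζj/p)*x))
        = (1/s) * Real.exp (-(γk*σ2/p) + -((1/s + γk*ζj/p)*x)) from by rw [Real.exp_add]; ring,
      show (1/s) * Real.exp (-((1/s)*x)) * Real.exp (-((1/p) * ((x - γj*σ2)/(γj*ζk))))
        = (1/s) * Real.exp (-((1/s)*x) + -((1/p) * ((x - γj*σ2)/(γj*ζk)))) from by rw [Real.exp_add]; ring,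
      show (1/s) * Real.exp (-((1/s)*x)) * Real.exp (-((1/p) * (γk*(x*ζj+σ2))))
        = (1/s) * Real.exp (-((1/s)*x) + -((1/p) * (γk*(x*ζj+σ2)))) from by rw [Real.exp_add]; ring]
    congr 3
    · field_simp
      ring
    · field_simp
      ring
  -- convert to real integrals
  have hintA : IntegrableOn (fun x => (1/s * Real.exp (-(γk*σ2/p))) * Real.exp (-((1/s + γk*ζj/p)*x))) (Ico 0 (γj*σ2)) :=
    integrableOn_exp_Ico hlam4 _ _
  have hrealA : pm {q : ℝ × ℝ | q.1 ∈ Ico 0 (γj*σ2) ∧ q.2 ∈ Ioi (γk*(q.1*ζj+σ2))} = ENNReal.ofReal ((1/s * Real.exp (-(γk*σ2/p))) * ((1 - Real.exp (-((1/s + γk*ζj/p)*(γj*σ2))))/(1/s + γk*ζj/p))) := by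
    rw [hpmA2, lint_toOfReal measurableSet_Ico hintA (fun x _ => by positivity),
      int_Ico hlam4.ne' _ _ haa.le]
  have hintB1 : IntegrableOn
      (fun x => (1/s) * Real.exp (-((1/s)*x)) - (1/s * Real.exp (-(γk*σ2/p))) * Real.exp (-((1/s + γk*ζj/p)*x))) (Ico 0 (γj*σ2)) := by
    exact (integrableOn_exp_Ico hrs (1/s) (γj*σ2)).sub hintA
  have hB1nn : ∀ x ∈ Ico 0 (γj*σ2),
      0 ≤ (1/s) * Real.exp (-((1/s)*x)) - (1/s * Real.exp (-(γk*σ2/p))) * Real.exp (-((1/s + γk*ζj/p)*x)) := by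
    intro x hx
    have hx0 : (0:ℝ) ≤ x := hx.1
    rw [show (1/s * Real.exp (-(γk*σ2/p))) * Real.exp (-((1/s + γk*ζj/p)*x))
        = (1/s) * Real.exp (-(γk*σ2/p) + -((1/s + γk*ζj/p)*x)) from by rw [Real.exp_add]; ring,
      sub_nonneg]
    refine mul_le_mul_of_nonneg_left (Real.exp_le_exp.2 ?_) (by positivity)
    have h1 : 0 ≤ γk*σ2/p := by positivity
    have h2 : 0 ≤ γk*ζj/p * x := by positivity
    nlinarith
  have hrealB1 : pm {q : ℝ × ℝ | q.1 ∈ Ico 0 (γj*σ2) ∧ q.2 ∈ Ico 0 (γk*(q.1*ζj+σ2))} = ENNReal.ofReal ((1/s) * ((1 - Real.exp (-((1/s)*(γj*σ2))))/(1/s)) - (1/s * Real.exp (-(γk*σ2/p))) * ((1 - Real.exp (-((1/s + γk*ζj/p)*(γj*σ2))))/(1/s + γk*ζj/p))) := by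
    rw [hpmB1, lint_toOfReal measurableSet_Ico hintB1 hB1nn,
      integral_sub (integrableOn_exp_Ico hrs (1/s) (γj*σ2)) hintA,
      int_Ico hrs.ne' _ _ haa.le, int_Ico hlam4.ne' _ _ haa.le]
  have hintB2a : IntegrableOn (fun x => (1/s * Real.exp ((1/p)*((γj*σ2)/(γj*ζk)))) * Real.exp (-((1/s + 1/(p*(γj*ζk)))*x))) (Ici (γj*σ2)) :=
    integrableOn_exp_Ici hlam3 _ _
  have hintB2b : IntegrableOn (fun x => (1/s * Real.exp (-(γk*σ2/p))) * Real.exp (-((1/s + γk*ζj/p)*x))) (Ici (γj*σ2)) :=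
    integrableOn_exp_Ici hlam4 _ _
  have hintB2 : IntegrableOn
      (fun x => (1/s * Real.exp ((1/p)*((γj*σ2)/(γj*ζk)))) * Real.exp (-((1/s + 1/(p*(γj*ζk)))*x)) - (1/s * Real.exp (-(γk*σ2/p))) * Real.exp (-((1/s + γk*ζj/p)*x))) (Ici (γj*σ2)) := by
    exact hintB2a.sub hintB2b
  have hB2nn : ∀ x ∈ Ici (γj*σ2),
      0 ≤ (1/s * Real.exp ((1/p)*((γj*σ2)/(γj*ζk)))) * Real.exp (-((1/s + 1/(p*(γj*ζk)))*x)) - (1/s * Real.exp (-(γk*σ2/p))) * Real.exp (-((1/s + γk*ζj/p)*x)) := by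
    intro x hx
    have hx0 : (0:ℝ) ≤ x := le_trans haa.le hx
    rw [show (1/s * Real.exp ((1/p)*((γj*σ2)/(γj*ζk)))) * Real.exp (-((1/s + 1/(p*(γj*ζk)))*x))
        = (1/s) * Real.exp ((1/p)*((γj*σ2)/(γj*ζk)) + -((1/s + 1/(p*(γj*ζk)))*x)) from by rw [Real.exp_add]; ring,
      show (1/s * Real.exp (-(γk*σ2/p))) * Real.exp (-((1/s + γk*ζj/p)*x))
        = (1/s) * Real.exp (-(γk*σ2/p) + -((1/s + γk*ζj/p)*x)) from by rw [Real.exp_add]; ring,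
      sub_nonneg]
    exact mul_le_mul_of_nonneg_left (Real.exp_le_exp.2
      (exp_arg_le s p γj γk ζj ζk σ2 x hs hp hγj hζj hζk (hlc x hx))) (by positivity)
  have hrealB2 : pm {q : ℝ × ℝ | q.1 ∈ Ici (γj*σ2) ∧ q.2 ∈ Ioo ((q.1 - γj*σ2)/(γj*ζk)) (γk*(q.1*ζj+σ2))} = ENNReal.ofReal ((1/s * Real.exp ((1/p)*((γj*σ2)/(γj*ζk)))) * (Real.exp (-((1/s + 1/(p*(γj*ζk)))*(γj*σ2)))/(1/s + 1/(p*(γj*ζk)))) - (1/s * Real.exp (-(γk*σ2/p))) * (Real.exp (-((1/s + γk*ζj/p)*(γj*σ2)))/(1/s + γk*ζj/p))) := by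
    rw [hpmB2, lint_toOfReal measurableSet_Ici hintB2 hB2nn,
      integral_sub hintB2a hintB2b, int_Ici hlam3 _ _, int_Ici hlam4 _ _]
  -- nonnegativity of the closed forms
  have hVAnn : 0 ≤ (1/s * Real.exp (-(γk*σ2/p))) * ((1 - Real.exp (-((1/s + γk*ζj/p)*(γj*σ2))))/(1/s + γk*ζj/p)) := by
    have h1 : Real.exp (-((1/s + γk*ζj/p)*(γj*σ2))) ≤ 1 := Real.exp_le_one_iff.2 (by nlinarith)
    have h2 : 0 ≤ (1 - Real.exp (-((1/s + γk*ζj/p)*(γj*σ2))))/(1/s + γk*ζj/p) := div_nonneg (by linarith) hlam4.le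
    positivity
  have hVB1nn : 0 ≤ (1/s) * ((1 - Real.exp (-((1/s)*(γj*σ2))))/(1/s)) - (1/s * Real.exp (-(γk*σ2/p))) * ((1 - Real.exp (-((1/s + γk*ζj/p)*(γj*σ2))))/(1/s + γk*ζj/p)) := by
    have h := setIntegral_nonneg (μ := volume) measurableSet_Ico hB1nn
    rwa [integral_sub (integrableOn_exp_Ico hrs (1/s) (γj*σ2)) hintA,
      int_Ico hrs.ne' _ _ haa.le, int_Ico hlam4.ne' _ _ haa.le] at h
  have hVB2nn : 0 ≤ (1/s * Real.exp ((1/p)*((γj*σ2)/(γj*ζk)))) * (Real.exp (-((1/s + 1/(p*(γj*ζk)))*(γj*σ2)))/(1/s + 1/(p*(γj*ζk)))) - (1/s * Real.exp (-(γk*σ2/p))) * (Real.exp (-((1/s + γk*ζj/p)*(γj*σ2)))/(1/s + γk*ζj/p)) := by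
    have h := setIntegral_nonneg (μ := volume) measurableSet_Ici hB2nn
    rwa [integral_sub hintB2a hintB2b, int_Ici hlam3 _ _, int_Ici hlam4 _ _] at h
  rw [hmuA, hmuB, hrealA, hrealB1, hrealB2, ← ENNReal.ofReal_add hVB1nn hVB2nn,
    ENNReal.toReal_ofReal hVAnn, ENNReal.toReal_ofReal (by linarith)]
  exact final_algebra s p γj γk ζj ζk σ2 hs hp hγj hγk hζj hζk hσ
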